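/- There exists a constant C > 0 such that for all 0 < t ≤ 1, all x, y ∈ ℝ^d and all 1 ≤ j ≤ d, the following three estimates hold: |(y_j − x_j)² k_t^0(x,y)| ≤ C t^{−d/2} e^{−|x−y|²/(8t)}, |(y_j + x_j)² k_t^0(x,y)| ≤ C t^{−d/2−1} e^{−|x−y|²/(4t)}, and |(y_j + x_j)(y_j − x_j) k_t^0(x,y)| ≤ C t^{−d/2−1/2} e^{−|x−y|²/(8t)}. -/

import Mathlib

open Real

/-- The classical Hermite (Mehler) heat kernel on `ℝ^d`:
`k_t^0(x,y) = (2π sinh(2t))^{-d/2} exp(-(1/4)(tanh(t)|x+y|² + coth(t)|x-y|²))`,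
where `coth t = cosh t / sinh t`. -/
noncomputable def mehlerKernel (d : ℕ) (t : ℝ) (x y : EuclideanSpace ℝ (Fin d)) : ℝ :=
  (2 * Real.pi * Real.sinh (2 * t)) ^ (-(d : ℝ) / 2) *
    Real.exp (-(1 / 4) *
      (Real.tanh t * ‖x + y‖ ^ 2 + (Real.cosh t / Real.sinh t) * ‖x - y‖ ^ 2))

lemma aux_selfexp (s : ℝ) (hs : 0 ≤ s) : s * Real.exp (-s) ≤ 1 := by
  have h1 : s ≤ Real.exp s := le_trans (by linarith) (Real.add_one_le_exp s)
  calc s * Real.exp (-s) ≤ Real.exp s * Real.exp (-s) :=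
        mul_le_mul_of_nonneg_right h1 (Real.exp_pos _).le
    _ = 1 := by rw [← Real.exp_add]; simp

lemma aux_mulexp {a b : ℝ} (ha : 0 ≤ a) (hb : 0 < b) : a * Real.exp (-(a / b)) ≤ b := by
  have h := aux_selfexp (a / b) (by positivity)
  calc a * Real.exp (-(a / b)) = b * ((a / b) * Real.exp (-(a / b))) := by field_simp
    _ ≤ b * 1 := mul_le_mul_of_nonneg_left h hb.le
    _ = b := mul_one b

lemma aux_sinh_le {t : ℝ} (ht : 0 ≤ t) : Real.sinh t ≤ t * Real.cosh t := by
  have key : MonotoneOn (fun s => s * Real.cosh s - Real.sinh s) (Set.Ici 0) := by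
    apply monotoneOn_of_deriv_nonneg (convex_Ici 0)
    · exact ((continuous_id.mul Real.continuous_cosh).sub Real.continuous_sinh).continuousOn
    · intro s _
      exact ((differentiable_id.mul Real.differentiable_cosh).sub
        Real.differentiable_sinh).differentiableAt.differentiableWithinAt
    · intro s hs
      rw [interior_Ici] at hs
      have hd : HasDerivAt (fun s => s * Real.cosh s - Real.sinh s) (s * Real.sinh s) s := by
        have := ((hasDerivAt_id s).mul (Real.hasDerivAt_cosh s)).sub (Real.hasDerivAt_sinh s)
        rw [show s * Real.sinh s = 1 * Real.cosh s + id s * Real.sinh s - Real.cosh s by simp]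
        exact this
      rw [hd.deriv]
      exact mul_nonneg (le_of_lt hs) (Real.sinh_nonneg_iff.mpr (le_of_lt hs))
  have h := key Set.self_mem_Ici (Set.mem_Ici.mpr ht) ht
  simp only [Real.cosh_zero, Real.sinh_zero, zero_mul, sub_zero, mul_zero] at h
  linarith

lemma mehlerKernel_pos (d : ℕ) {t : ℝ} (ht : 0 < t) (x y : EuclideanSpace ℝ (Fin d)) :
    0 < mehlerKernel d t x y := by
  have hs : 0 < Real.sinh (2 * t) := Real.sinh_pos_iff.mpr (by linarith)
  have : 0 < 2 * Real.pi * Real.sinh (2 * t) := by positivity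
  exact mul_pos (Real.rpow_pos_of_pos this _) (Real.exp_pos _)

lemma mehlerKernel_le (d : ℕ) {t : ℝ} (ht : 0 < t) (ht1 : t ≤ 1)
    (x y : EuclideanSpace ℝ (Fin d)) :
    mehlerKernel d t x y ≤ (4 * Real.pi) ^ (-(d : ℝ) / 2) * t ^ (-(d : ℝ) / 2) *
      (Real.exp (-(t / 8 * ‖x + y‖ ^ 2)) * Real.exp (-‖x - y‖ ^ 2 / (4 * t))) := by
  have hπ := Real.pi_pos
  have hdle : -(d : ℝ) / 2 ≤ 0 := by
    have : (0:ℝ) ≤ d := Nat.cast_nonneg d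
    linarith
  have hs2 : 2 * t < Real.sinh (2 * t) := Real.self_lt_sinh_iff.mpr (by linarith)
  have hA : (2 * Real.pi * Real.sinh (2 * t)) ^ (-(d : ℝ) / 2) ≤
      (4 * Real.pi) ^ (-(d : ℝ) / 2) * t ^ (-(d : ℝ) / 2) := by
    rw [← Real.mul_rpow (by positivity) ht.le]
    exact Real.rpow_le_rpow_of_nonpos (by positivity) (by nlinarith) hdle
  have hcosht : Real.cosh t < 2 := by
    have h1 : Real.cosh t ≤ Real.cosh 1 := by
      rw [Real.cosh_le_cosh]
      rw [abs_of_pos ht, abs_one]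
      exact ht1
    have h2 : Real.cosh 1 < 2 := by
      rw [Real.cosh_eq]
      have := Real.exp_one_lt_d9
      have h3 : Real.exp (-1) < 1 := by
        rw [show (1:ℝ) = Real.exp 0 by simp]
        exact Real.exp_lt_exp.mpr (by norm_num)
      norm_num
      linarith
    linarith
  have hsinht : t < Real.sinh t := Real.self_lt_sinh_iff.mpr ht
  have hst : 0 < Real.sinh t := Real.sinh_pos_iff.mpr ht
  have hcoshpos := Real.cosh_pos t
  have htanh : t / 2 ≤ Real.tanh t := by
    rw [Real.tanh_eq_sinh_div_cosh, le_div_iff₀ hcoshpos]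
    nlinarith
  have hcoth : 1 / t ≤ Real.cosh t / Real.sinh t := by
    rw [div_le_div_iff₀ ht hst]
    nlinarith [aux_sinh_le ht.le]
  have hP : (0:ℝ) ≤ ‖x + y‖ ^ 2 := by positivity
  have hS : (0:ℝ) ≤ ‖x - y‖ ^ 2 := by positivity
  have hexp : Real.exp (-(1 / 4) *
      (Real.tanh t * ‖x + y‖ ^ 2 + Real.cosh t / Real.sinh t * ‖x - y‖ ^ 2)) ≤
      Real.exp (-(t / 8 * ‖x + y‖ ^ 2)) * Real.exp (-‖x - y‖ ^ 2 / (4 * t)) := by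
    rw [← Real.exp_add]
    apply Real.exp_le_exp.mpr
    have e1 : t / 8 * ‖x + y‖ ^ 2 ≤ 1 / 4 * (Real.tanh t * ‖x + y‖ ^ 2) := by nlinarith
    have e2 : ‖x - y‖ ^ 2 / (4 * t) ≤ 1 / 4 * (Real.cosh t / Real.sinh t * ‖x - y‖ ^ 2) := by
      have h := mul_le_mul_of_nonneg_right hcoth hS
      calc ‖x - y‖ ^ 2 / (4 * t) = 1 / t * ‖x - y‖ ^ 2 / 4 := by ring
        _ ≤ Real.cosh t / Real.sinh t * ‖x - y‖ ^ 2 / 4 := by linarith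
        _ = 1 / 4 * (Real.cosh t / Real.sinh t * ‖x - y‖ ^ 2) := by ring
    have h4 : -‖x - y‖ ^ 2 / (4 * t) = -(‖x - y‖ ^ 2 / (4 * t)) := by ring
    rw [h4]
    linarith
  exact mul_le_mul hA hexp (Real.exp_pos _).le (by positivity)

lemma coord_sq_le {d : ℕ} (v : EuclideanSpace ℝ (Fin d)) (j : Fin d) : (v j) ^ 2 ≤ ‖v‖ ^ 2 := by
  rw [EuclideanSpace.norm_eq, Real.sq_sqrt (by positivity)]
  have := Finset.single_le_sum (f := fun i => ‖v i‖ ^ 2)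
    (fun i _ => by positivity) (Finset.mem_univ j)
  simpa [sq_abs] using this

lemma scalar1 {t S P : ℝ} (ht : 0 < t) (ht1 : t ≤ 1) (hS : 0 ≤ S) (hP : 0 ≤ P) :
    S * (Real.exp (-(t / 8 * P)) * Real.exp (-S / (4 * t))) ≤ 8 * Real.exp (-S / (8 * t)) := by
  have hE : Real.exp (-S / (4 * t)) = Real.exp (-S / (8 * t)) * Real.exp (-S / (8 * t)) := by
    rw [← Real.exp_add]; congr 1; field_simp; ring
  have h1 : S * Real.exp (-S / (8 * t)) ≤ 8 * t := by
    have := aux_mulexp hS (show (0:ℝ) < 8 * t by linarith)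
    rw [show -(S / (8 * t)) = -S / (8 * t) by ring] at this
    exact this
  have he1 : Real.exp (-(t / 8 * P)) ≤ 1 := Real.exp_le_one_iff.mpr (by nlinarith)
  have hEle : Real.exp (-S / (8 * t)) ≤ 1 :=
    Real.exp_le_one_iff.mpr (by rw [neg_div, neg_nonpos]; positivity)
  have hEpos := Real.exp_pos (-S / (8 * t))
  have h2 : S * Real.exp (-S / (8 * t)) * Real.exp (-S / (8 * t)) ≤
      8 * t * Real.exp (-S / (8 * t)) :=
    mul_le_mul_of_nonneg_right h1 hEpos.le
  have hSE : 0 ≤ S * (Real.exp (-S / (8 * t)) * Real.exp (-S / (8 * t))) := by positivity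
  rw [hE]
  nlinarith [Real.exp_pos (-(t / 8 * P))]

lemma scalar2 {t S P : ℝ} (ht : 0 < t) (hS : 0 ≤ S) (hP : 0 ≤ P) :
    P * (Real.exp (-(t / 8 * P)) * Real.exp (-S / (4 * t))) ≤
      8 / t * Real.exp (-S / (4 * t)) := by
  have h1 : P * Real.exp (-(t / 8 * P)) ≤ 8 / t := by
    have := aux_mulexp hP (show (0:ℝ) < 8 / t by positivity)
    rw [show -(P / (8 / t)) = -(t / 8 * P) by field_simp] at this
    exact this
  calc P * (Real.exp (-(t / 8 * P)) * Real.exp (-S / (4 * t)))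
      = P * Real.exp (-(t / 8 * P)) * Real.exp (-S / (4 * t)) := by ring
    _ ≤ 8 / t * Real.exp (-S / (4 * t)) :=
        mul_le_mul_of_nonneg_right h1 (Real.exp_pos _).le

lemma scalar3 {t S P u v : ℝ} (ht : 0 < t) (ht1 : t ≤ 1) (hS : 0 ≤ S) (hP : 0 ≤ P)
    (hu : u ^ 2 ≤ P) (hv : v ^ 2 ≤ S) :
    |u * v| * (Real.exp (-(t / 8 * P)) * Real.exp (-S / (4 * t))) ≤
      8 / Real.sqrt t * Real.exp (-S / (8 * t)) := by
  set r := Real.sqrt t with hrdef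
  have hr : 0 < r := Real.sqrt_pos.mpr ht
  have hr2 : r ^ 2 = t := Real.sq_sqrt ht.le
  have hr1 : r ≤ 1 := by
    rw [hrdef, show (1:ℝ) = Real.sqrt 1 by simp]
    exact Real.sqrt_le_sqrt ht1
  set E := Real.exp (-S / (8 * t)) with hEdef
  set e1 := Real.exp (-(t / 8 * P)) with he1def
  have hE : Real.exp (-S / (4 * t)) = E * E := by
    rw [hEdef, ← Real.exp_add]; congr 1; field_simp; ring
  have hEpos : 0 < E := Real.exp_pos _
  have hEle : E ≤ 1 := Real.exp_le_one_iff.mpr (by rw [neg_div, neg_nonpos]; positivity)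
  have he1pos : 0 < e1 := Real.exp_pos _
  have he1le : e1 ≤ 1 := Real.exp_le_one_iff.mpr (by nlinarith)
  have h1 : P * e1 ≤ 8 / t := by
    have := aux_mulexp hP (show (0:ℝ) < 8 / t by positivity)
    rw [show -(P / (8 / t)) = -(t / 8 * P) by field_simp] at this
    exact this
  have h2 : S * E ≤ 8 * t := by
    have := aux_mulexp hS (show (0:ℝ) < 8 * t by linarith)
    rw [show -(S / (8 * t)) = -S / (8 * t) by ring] at this
    exact this
  have h3 : |u * v| * r ≤ (t * P + S) / 2 := by
    nlinarith [sq_nonneg (r * |u| - |v|), sq_abs u, sq_abs v, abs_mul u v,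
      abs_nonneg u, abs_nonneg v, sq_nonneg u, sq_nonneg v]
  have key : r * (|u * v| * (e1 * (E * E))) ≤ 8 * E := by
    have c1 : t * P * e1 ≤ 8 := by
      have := mul_le_mul_of_nonneg_left h1 ht.le
      calc t * P * e1 = t * (P * e1) := by ring
        _ ≤ t * (8 / t) := this
        _ = 8 := by field_simp
    have c2 : t * P * e1 * (E * E) ≤ 8 * E := by
      nlinarith [mul_nonneg (mul_nonneg (mul_nonneg ht.le hP) he1pos.le) hEpos.le]
    have c3 : S * E * (e1 * E) ≤ 8 * E := by
      have d1 : S * E * (e1 * E) ≤ 8 * t * (e1 * E) :=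
        mul_le_mul_of_nonneg_right h2 (mul_nonneg he1pos.le hEpos.le)
      have d2 : t * e1 ≤ 1 * 1 := mul_le_mul ht1 he1le he1pos.le zero_le_one
      have d3 : t * e1 * E ≤ 1 * 1 * E := mul_le_mul_of_nonneg_right d2 hEpos.le
      nlinarith
    calc r * (|u * v| * (e1 * (E * E))) = (|u * v| * r) * (e1 * (E * E)) := by ring
      _ ≤ (t * P + S) / 2 * (e1 * (E * E)) := by
          apply mul_le_mul_of_nonneg_right h3 (by positivity)
      _ = (t * P * e1 * (E * E) + S * E * (e1 * E)) / 2 := by ring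
      _ ≤ (8 * E + 8 * E) / 2 := by linarith
      _ = 8 * E := by ring
  rw [hE]
  rw [div_mul_eq_mul_div, le_div_iff₀ hr]
  calc |u * v| * (e1 * (E * E)) * r = r * (|u * v| * (e1 * (E * E))) := by ring
    _ ≤ 8 * E := key

/-- There exists `C > 0` such that for all `0 < t ≤ 1`, all `x, y ∈ ℝ^d` and all
`1 ≤ j ≤ d`, the three quadratic-factor estimates on the Mehler kernel hold. -/
theorem mehlerKernel_quadratic_bounds (d : ℕ) (hd : 1 ≤ d) :
    ∃ C > (0 : ℝ), ∀ t : ℝ, 0 < t → t ≤ 1 →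
      ∀ x y : EuclideanSpace ℝ (Fin d), ∀ j : Fin d,
        |(y j - x j) ^ 2 * mehlerKernel d t x y| ≤
            C * t ^ (-(d : ℝ) / 2) * Real.exp (-‖x - y‖ ^ 2 / (8 * t)) ∧
        |(y j + x j) ^ 2 * mehlerKernel d t x y| ≤
            C * t ^ (-(d : ℝ) / 2 - 1) * Real.exp (-‖x - y‖ ^ 2 / (4 * t)) ∧
        |(y j + x j) * (y j - x j) * mehlerKernel d t x y| ≤
            C * t ^ (-(d : ℝ) / 2 - 1 / 2) * Real.exp (-‖x - y‖ ^ 2 / (8 * t)) := by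
  have hπ := Real.pi_pos
  refine ⟨8 * (4 * Real.pi) ^ (-(d : ℝ) / 2), by positivity, ?_⟩
  intro t ht ht1 x y j
  have hk := mehlerKernel_le d ht ht1 x y
  have hkpos := mehlerKernel_pos d ht x y
  have hP : (0:ℝ) ≤ ‖x + y‖ ^ 2 := by positivity
  have hS : (0:ℝ) ≤ ‖x - y‖ ^ 2 := by positivity
  have hv : (y j - x j) ^ 2 ≤ ‖x - y‖ ^ 2 := by
    have h := coord_sq_le (x - y) j
    have h2 : (x - y) j = x j - y j := rfl
    rw [h2] at h
    nlinarith
  have hu : (y j + x j) ^ 2 ≤ ‖x + y‖ ^ 2 := by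
    have h := coord_sq_le (x + y) j
    have h2 : (x + y) j = x j + y j := rfl
    rw [h2] at h
    nlinarith
  have hC0 : (0:ℝ) < (4 * Real.pi) ^ (-(d : ℝ) / 2) := by positivity
  have htz : (0:ℝ) < t ^ (-(d : ℝ) / 2) := Real.rpow_pos_of_pos ht _
  refine ⟨?_, ?_, ?_⟩
  · rw [abs_of_nonneg (mul_nonneg (sq_nonneg _) hkpos.le)]
    calc (y j - x j) ^ 2 * mehlerKernel d t x y
        ≤ ‖x - y‖ ^ 2 * ((4 * Real.pi) ^ (-(d : ℝ) / 2) * t ^ (-(d : ℝ) / 2) *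
            (Real.exp (-(t / 8 * ‖x + y‖ ^ 2)) * Real.exp (-‖x - y‖ ^ 2 / (4 * t)))) :=
          mul_le_mul hv hk hkpos.le hS
      _ = (4 * Real.pi) ^ (-(d : ℝ) / 2) * t ^ (-(d : ℝ) / 2) *
            (‖x - y‖ ^ 2 * (Real.exp (-(t / 8 * ‖x + y‖ ^ 2)) *
              Real.exp (-‖x - y‖ ^ 2 / (4 * t)))) := by ring
      _ ≤ (4 * Real.pi) ^ (-(d : ℝ) / 2) * t ^ (-(d : ℝ) / 2) *
            (8 * Real.exp (-‖x - y‖ ^ 2 / (8 * t))) :=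
          mul_le_mul_of_nonneg_left (scalar1 ht ht1 hS hP) (by positivity)
      _ = 8 * (4 * Real.pi) ^ (-(d : ℝ) / 2) * t ^ (-(d : ℝ) / 2) *
            Real.exp (-‖x - y‖ ^ 2 / (8 * t)) := by ring
  · rw [abs_of_nonneg (mul_nonneg (sq_nonneg _) hkpos.le)]
    calc (y j + x j) ^ 2 * mehlerKernel d t x y
        ≤ ‖x + y‖ ^ 2 * ((4 * Real.pi) ^ (-(d : ℝ) / 2) * t ^ (-(d : ℝ) / 2) *
            (Real.exp (-(t / 8 * ‖x + y‖ ^ 2)) * Real.exp (-‖x - y‖ ^ 2 / (4 * t)))) :=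
          mul_le_mul hu hk hkpos.le hP
      _ = (4 * Real.pi) ^ (-(d : ℝ) / 2) * t ^ (-(d : ℝ) / 2) *
            (‖x + y‖ ^ 2 * (Real.exp (-(t / 8 * ‖x + y‖ ^ 2)) *
              Real.exp (-‖x - y‖ ^ 2 / (4 * t)))) := by ring
      _ ≤ (4 * Real.pi) ^ (-(d : ℝ) / 2) * t ^ (-(d : ℝ) / 2) *
            (8 / t * Real.exp (-‖x - y‖ ^ 2 / (4 * t))) :=
          mul_le_mul_of_nonneg_left (scalar2 ht hS hP) (by positivity)
      _ = 8 * (4 * Real.pi) ^ (-(d : ℝ) / 2) * (t ^ (-(d : ℝ) / 2) / t) *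
            Real.exp (-‖x - y‖ ^ 2 / (4 * t)) := by ring
      _ = 8 * (4 * Real.pi) ^ (-(d : ℝ) / 2) * t ^ (-(d : ℝ) / 2 - 1) *
            Real.exp (-‖x - y‖ ^ 2 / (4 * t)) := by
          rw [Real.rpow_sub ht, Real.rpow_one]
  · rw [abs_mul, abs_of_pos hkpos]
    calc |(y j + x j) * (y j - x j)| * mehlerKernel d t x y
        ≤ |(y j + x j) * (y j - x j)| * ((4 * Real.pi) ^ (-(d : ℝ) / 2) * t ^ (-(d : ℝ) / 2) *
            (Real.exp (-(t / 8 * ‖x + y‖ ^ 2)) * Real.exp (-‖x - y‖ ^ 2 / (4 * t)))) :=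
          mul_le_mul_of_nonneg_left hk (abs_nonneg _)
      _ = (4 * Real.pi) ^ (-(d : ℝ) / 2) * t ^ (-(d : ℝ) / 2) *
            (|(y j + x j) * (y j - x j)| * (Real.exp (-(t / 8 * ‖x + y‖ ^ 2)) *
              Real.exp (-‖x - y‖ ^ 2 / (4 * t)))) := by ring
      _ ≤ (4 * Real.pi) ^ (-(d : ℝ) / 2) * t ^ (-(d : ℝ) / 2) *
            (8 / Real.sqrt t * Real.exp (-‖x - y‖ ^ 2 / (8 * t))) :=
          mul_le_mul_of_nonneg_left (scalar3 ht ht1 hS hP hu hv) (by positivity)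
      _ = 8 * (4 * Real.pi) ^ (-(d : ℝ) / 2) * (t ^ (-(d : ℝ) / 2) / Real.sqrt t) *
            Real.exp (-‖x - y‖ ^ 2 / (8 * t)) := by ring
      _ = 8 * (4 * Real.pi) ^ (-(d : ℝ) / 2) * t ^ (-(d : ℝ) / 2 - 1 / 2) *
            Real.exp (-‖x - y‖ ^ 2 / (8 * t)) := by
          rw [Real.sqrt_eq_rpow, ← Real.rpow_sub ht]
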